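/- arXiv:2409.10970 — 3 statements merged into one kernel-verified Lean document; each statement's English description precedes it below -/
import Mathlib

section
/- Let H, Q be symmetric real (hm)×(hm) matrices with H ⪰ λ_H·I and Q ⪰ ε_Q·I for constants λ_H, ε_Q > 0, let Z be an (hm)×n real matrix with ‖Z‖ ≤ c, let P be a symmetric n×n matrix with P ⪰ ε_P·I, and let κ > 0. Then the block matrix M = [[P + κ·Zᵀ Q Z, κ·Zᵀ Q H], [κ·H Q Z, κ·H Q H]] is positive definite, and moreover for any ε with 0 < ε < κ ε_Q λ_H² and c²·κ·ε_Q·ε/(κ ε_Q λ_H² − ε) + ε ≤ ε_P, one has M ⪰ ε·I. -/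
open Matrix Finset

private lemma dot_lb' {m : Type*} [Fintype m] [DecidableEq m] {A : Matrix m m ℝ} {a : ℝ}
    (h : (A - a • (1 : Matrix m m ℝ)).PosSemidef) (v : m → ℝ) :
    a * (v ⬝ᵥ v) ≤ v ⬝ᵥ A *ᵥ v := by
  have := h.dotProduct_mulVec_nonneg v
  simp only [star_trivial, sub_mulVec, dotProduct_sub, smul_mulVec, one_mulVec,
    dotProduct_smul, smul_eq_mul] at this
  linarith

private lemma cross_lb' {ι : Type*} [Fintype ι] (u w : ι → ℝ) {s : ℝ} (hs : 0 < s) :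
    -(s * ∑ i, u i ^ 2 + (1/s) * ∑ i, w i ^ 2) ≤ 2 * ∑ i, u i * w i := by
  have h0 : 0 ≤ ∑ i, (s * u i + w i) ^ 2 := Finset.sum_nonneg fun i _ => sq_nonneg _
  have hexp : ∑ i, (s * u i + w i) ^ 2
      = s^2 * ∑ i, u i ^ 2 + 2 * s * ∑ i, u i * w i + ∑ i, w i ^ 2 := by
    rw [Finset.mul_sum, Finset.mul_sum, ← Finset.sum_add_distrib, ← Finset.sum_add_distrib]
    exact Finset.sum_congr rfl fun i _ => by ring
  rw [hexp] at h0
  have h2 : -(s^2 * ∑ i, u i ^ 2 + ∑ i, w i ^ 2) ≤ s * (2 * ∑ i, u i * w i) := by linarith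
  have e1 : -(s * ∑ i, u i ^ 2 + (1/s) * ∑ i, w i ^ 2)
      = (1/s) * (-(s^2 * ∑ i, u i ^ 2 + ∑ i, w i ^ 2)) := by
    field_simp
  have e2 : (1/s) * (s * (2 * ∑ i, u i * w i)) = 2 * ∑ i, u i * w i := by
    field_simp
  rw [e1, ← e2]
  exact mul_le_mul_of_nonneg_left h2 (by positivity)

private lemma dself' {ι : Type*} [Fintype ι] (u : ι → ℝ) : u ⬝ᵥ u = ∑ i, u i ^ 2 := by
  simp [dotProduct, pow_two]

private lemma normsq_lb' {m : Type*} [Fintype m] [DecidableEq m] {A : Matrix m m ℝ} {a : ℝ}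
    (ha : 0 < a) (h : (A - a • (1 : Matrix m m ℝ)).PosSemidef) (v : m → ℝ) :
    a ^ 2 * ∑ i, v i ^ 2 ≤ ∑ i, (A *ᵥ v) i ^ 2 := by
  have hCS := Finset.sum_mul_sq_le_sq_mul_sq Finset.univ v (A *ᵥ v)
  have hD : a * ∑ i, v i ^ 2 ≤ ∑ i, v i * (A *ᵥ v) i := by
    have := dot_lb' h v
    rw [dself'] at this
    exact this
  have hSv : (0:ℝ) ≤ ∑ i, v i ^ 2 := Finset.sum_nonneg fun i _ => sq_nonneg _
  have hSA : (0:ℝ) ≤ ∑ i, (A *ᵥ v) i ^ 2 := Finset.sum_nonneg fun i _ => sq_nonneg _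
  rcases eq_or_lt_of_le hSv with h0 | h0
  · rw [← h0]
    simpa using hSA
  · have h1 : (a * ∑ i, v i ^ 2)^2 ≤ (∑ i, v i * (A *ᵥ v) i)^2 := by
      apply pow_le_pow_left₀ (by positivity) hD
    nlinarith [h1, hCS, h0]

/-- uniform positive definiteness of the contraction metric
`M = [[P + κ ZᵀQZ, κ ZᵀQH], [κ HQZ, κ HQH]]`. -/
theorem stmt_0 (k n : ℕ)
    (H Q : Matrix (Fin k) (Fin k) ℝ) (P : Matrix (Fin n) (Fin n) ℝ)
    (Z : Matrix (Fin k) (Fin n) ℝ)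
    (lamH epsQ epsP c kappa : ℝ)
    (hH : H.IsSymm) (hQ : Q.IsSymm) (hP : P.IsSymm)
    (hlamH : 0 < lamH) (hepsQ : 0 < epsQ) (hepsP : 0 < epsP) (hkappa : 0 < kappa)
    (hHlb : (H - lamH • (1 : Matrix (Fin k) (Fin k) ℝ)).PosSemidef)
    (hQlb : (Q - epsQ • (1 : Matrix (Fin k) (Fin k) ℝ)).PosSemidef)
    (hPlb : (P - epsP • (1 : Matrix (Fin n) (Fin n) ℝ)).PosSemidef)
    (hZ : ∀ v : Fin n → ℝ,
      Real.sqrt (∑ i, (Z.mulVec v i) ^ 2) ≤ c * Real.sqrt (∑ j, (v j) ^ 2))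
    (M : Matrix (Fin n ⊕ Fin k) (Fin n ⊕ Fin k) ℝ)
    (hM : M = Matrix.fromBlocks
      (P + kappa • (Zᵀ * Q * Z)) (kappa • (Zᵀ * Q * H))
      (kappa • (H * Q * Z)) (kappa • (H * Q * H))) :
    M.PosDef ∧
      ∀ eps : ℝ, 0 < eps → eps < kappa * epsQ * lamH ^ 2 →
        c ^ 2 * kappa * epsQ * eps / (kappa * epsQ * lamH ^ 2 - eps) + eps ≤ epsP →
        (M - eps • (1 : Matrix (Fin n ⊕ Fin k) (Fin n ⊕ Fin k) ℝ)).PosSemidef := by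
  -- the quadratic form identity
  have key : ∀ v : Fin n ⊕ Fin k → ℝ,
      v ⬝ᵥ M *ᵥ v =
        (v ∘ Sum.inl) ⬝ᵥ P *ᵥ (v ∘ Sum.inl)
        + kappa * ((Z *ᵥ (v ∘ Sum.inl) + H *ᵥ (v ∘ Sum.inr)) ⬝ᵥ
            Q *ᵥ (Z *ᵥ (v ∘ Sum.inl) + H *ᵥ (v ∘ Sum.inr))) := by
    intro v
    subst hM
    set x := v ∘ Sum.inl
    set y := v ∘ Sum.inr
    rw [fromBlocks_mulVec, dotProduct_block, Sum.elim_comp_inl, Sum.elim_comp_inr]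
    rw [show v ∘ Sum.inl = x from rfl, show v ∘ Sum.inr = y from rfl]
    have hyH : ∀ u : Fin k → ℝ, y ⬝ᵥ H *ᵥ u = (H *ᵥ y) ⬝ᵥ u := by
      intro u
      rw [dotProduct_mulVec, ← vecMul_transpose, hH.eq]
    have hxZ : ∀ u : Fin k → ℝ, x ⬝ᵥ Zᵀ *ᵥ u = (Z *ᵥ x) ⬝ᵥ u := by
      intro u
      rw [dotProduct_mulVec, ← vecMul_transpose]
    simp only [add_mulVec, smul_mulVec, dotProduct_add, dotProduct_smul, smul_eq_mul,
      ← mulVec_mulVec, hyH, hxZ, mulVec_add, add_dotProduct]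
    ring
  -- symmetry
  have hsymm : M.IsHermitian := by
    rw [Matrix.IsHermitian, conjTranspose_eq_transpose_of_trivial, hM, fromBlocks_transpose]
    simp only [transpose_add, transpose_smul, transpose_mul, transpose_transpose,
      hH.eq, hQ.eq, hP.eq, Matrix.mul_assoc]
  -- scalar lower bounds
  have hZsq : ∀ x : Fin n → ℝ, ∑ i, (Z *ᵥ x) i ^ 2 ≤ c ^ 2 * ∑ j, x j ^ 2 := by
    intro x
    have hA : (0:ℝ) ≤ ∑ i, (Z *ᵥ x) i ^ 2 := Finset.sum_nonneg fun i _ => sq_nonneg _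
    have hB : (0:ℝ) ≤ ∑ j, x j ^ 2 := Finset.sum_nonneg fun i _ => sq_nonneg _
    calc ∑ i, (Z *ᵥ x) i ^ 2 = (Real.sqrt (∑ i, (Z *ᵥ x) i ^ 2)) ^ 2 :=
          (Real.sq_sqrt hA).symm
      _ ≤ (c * Real.sqrt (∑ j, x j ^ 2)) ^ 2 :=
          pow_le_pow_left₀ (Real.sqrt_nonneg _) (hZ x) 2
      _ = c ^ 2 * ∑ j, x j ^ 2 := by rw [mul_pow, Real.sq_sqrt hB]
  have hHsq := normsq_lb' hlamH hHlb
  have hPq := dot_lb' hPlb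
  have hQq := dot_lb' hQlb
  constructor
  · refine Matrix.PosDef.of_dotProduct_mulVec_pos hsymm fun v hv => ?_
    rw [star_trivial, key v]
    set x := v ∘ Sum.inl with hx
    set y := v ∘ Sum.inr with hy
    set w := Z *ᵥ x + H *ᵥ y with hw
    have hPx : epsP * (x ⬝ᵥ x) ≤ x ⬝ᵥ P *ᵥ x := hPq x
    have hQw : epsQ * (w ⬝ᵥ w) ≤ w ⬝ᵥ Q *ᵥ w := hQq w
    have hxx : (0:ℝ) ≤ x ⬝ᵥ x := by rw [dself']; positivity
    have hww : (0:ℝ) ≤ w ⬝ᵥ w := by rw [dself']; positivity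
    by_cases hx0 : x = 0
    · -- then y ≠ 0 and w = H *ᵥ y
      have hy0 : y ≠ 0 := by
        intro hy0
        apply hv
        funext i
        cases i with
        | inl i => exact congrFun hx0 i
        | inr i => exact congrFun hy0 i
      have hw' : w = H *ᵥ y := by rw [hw, hx0, mulVec_zero, zero_add]
      have hSy : (0:ℝ) < ∑ i, y i ^ 2 := by
        rcases Function.ne_iff.mp hy0 with ⟨i, hi⟩
        exact Finset.sum_pos' (fun j _ => sq_nonneg _)
          ⟨i, Finset.mem_univ i, pow_two_pos_of_ne_zero (by simpa using hi)⟩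
      have h1 : lamH ^ 2 * ∑ i, y i ^ 2 ≤ ∑ i, (H *ᵥ y) i ^ 2 := hHsq y
      have h2 : (0:ℝ) < w ⬝ᵥ w := by
        rw [dself', hw']
        have := mul_pos (pow_pos hlamH 2) hSy
        linarith
      have h3 : (0:ℝ) ≤ x ⬝ᵥ P *ᵥ x := le_trans (by nlinarith) hPx
      have h4 : (0:ℝ) < w ⬝ᵥ Q *ᵥ w := lt_of_lt_of_le (mul_pos hepsQ h2) hQw
      have h5 := mul_pos hkappa h4
      linarith
    · have hSx : (0:ℝ) < ∑ i, x i ^ 2 := by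
        rcases Function.ne_iff.mp hx0 with ⟨i, hi⟩
        exact Finset.sum_pos' (fun j _ => sq_nonneg _)
          ⟨i, Finset.mem_univ i, pow_two_pos_of_ne_zero (by simpa using hi)⟩
      have hxx' : (0:ℝ) < x ⬝ᵥ x := by rw [dself']; exact hSx
      have h4 : (0:ℝ) ≤ w ⬝ᵥ Q *ᵥ w := le_trans (mul_nonneg hepsQ.le hww) hQw
      have h5 : (0:ℝ) < x ⬝ᵥ P *ᵥ x := lt_of_lt_of_le (mul_pos hepsP hxx') hPx
      have h6 := mul_nonneg hkappa.le h4
      linarith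
  · intro eps heps hepsA hepsP'
    set A := kappa * epsQ * lamH ^ 2 with hA
    have hD : 0 < A - eps := by linarith
    have hsymm' : Mᵀ = M := by
      rw [← conjTranspose_eq_transpose_of_trivial]
      exact hsymm
    refine Matrix.PosSemidef.of_dotProduct_mulVec_nonneg ?_ ?_
    · rw [Matrix.IsHermitian, conjTranspose_eq_transpose_of_trivial, transpose_sub,
        transpose_smul, transpose_one, hsymm']
    intro v
    rw [star_trivial, sub_mulVec, dotProduct_sub, smul_mulVec, one_mulVec,
      dotProduct_smul, smul_eq_mul, sub_nonneg, key v, dotProduct_block]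
    set x := v ∘ Sum.inl with hx
    set y := v ∘ Sum.inr with hy
    set u1 := Z *ᵥ x with hu1
    set u2 := H *ᵥ y with hu2
    set Sx := ∑ j, x j ^ 2 with hSx
    set Sy := ∑ j, y j ^ 2 with hSy
    set Su1 := ∑ i, u1 i ^ 2 with hSu1
    set Su2 := ∑ i, u2 i ^ 2 with hSu2
    have hdx : x ⬝ᵥ x = Sx := dself' x
    have hdy : y ⬝ᵥ y = Sy := dself' y
    have hPx : epsP * Sx ≤ x ⬝ᵥ P *ᵥ x := by rw [← hdx]; exact hPq x
    have hQw : epsQ * ((u1 + u2) ⬝ᵥ (u1 + u2)) ≤ (u1 + u2) ⬝ᵥ Q *ᵥ (u1 + u2) := hQq _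
    have hwexp : (u1 + u2) ⬝ᵥ (u1 + u2) = Su1 + 2 * ∑ i, u1 i * u2 i + Su2 := by
      rw [dself']
      rw [hSu1, hSu2, Finset.mul_sum, ← Finset.sum_add_distrib, ← Finset.sum_add_distrib]
      exact Finset.sum_congr rfl fun i _ => by simp [Pi.add_apply]; ring
    set s : ℝ := A / (A - eps) with hs
    have hs_pos : 0 < s := by positivity
    have hcross : -(s * Su1 + (1/s) * Su2) ≤ 2 * ∑ i, u1 i * u2 i := cross_lb' u1 u2 hs_pos
    have hZx : Su1 ≤ c ^ 2 * Sx := hZsq x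
    have hHy : lamH ^ 2 * Sy ≤ Su2 := hHsq y
    -- constants
    have hsm1 : s - 1 = eps / (A - eps) := by
      rw [hs]
      field_simp
      ring
    have hinv : 1 - 1/s = eps / A := by
      rw [hs]
      have hA0 : A ≠ 0 := by positivity
      field_simp
      ring
    have halpha : kappa * epsQ * (eps / A) * lamH ^ 2 = eps := by
      rw [hA]
      field_simp
    have hSx0 : (0:ℝ) ≤ Sx := Finset.sum_nonneg fun i _ => sq_nonneg _
    have hSy0 : (0:ℝ) ≤ Sy := Finset.sum_nonneg fun i _ => sq_nonneg _
    have hSu10 : (0:ℝ) ≤ Su1 := Finset.sum_nonneg fun i _ => sq_nonneg _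
    have hSu20 : (0:ℝ) ≤ Su2 := Finset.sum_nonneg fun i _ => sq_nonneg _
    -- kappa*epsQ * wdot ≥ -(kappa*epsQ)*(s-1)*Su1 + (kappa*epsQ)*(1-1/s)*Su2
    have hke : 0 < kappa * epsQ := mul_pos hkappa hepsQ
    have step1 : kappa * epsQ * ((u1 + u2) ⬝ᵥ (u1 + u2)) ≥
        -(kappa * epsQ * (s - 1) * Su1) + kappa * epsQ * (1 - 1/s) * Su2 := by
      rw [hwexp]
      nlinarith [hcross, hke]
    have step2 : kappa * epsQ * (1 - 1/s) * Su2 ≥ eps * Sy := by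
      rw [hinv]
      calc kappa * epsQ * (eps / A) * Su2 ≥ kappa * epsQ * (eps / A) * (lamH ^ 2 * Sy) := by
            apply mul_le_mul_of_nonneg_left hHy (by positivity)
        _ = (kappa * epsQ * (eps / A) * lamH ^ 2) * Sy := by ring
        _ = eps * Sy := by rw [halpha]
    have step3 : kappa * epsQ * (s - 1) * Su1 ≤ (epsP - eps) * Sx := by
      rw [hsm1]
      have h1 : kappa * epsQ * (eps / (A - eps)) * Su1
          ≤ kappa * epsQ * (eps / (A - eps)) * (c ^ 2 * Sx) := by
        apply mul_le_mul_of_nonneg_left hZx (by positivity)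
      have h2 : kappa * epsQ * (eps / (A - eps)) * (c ^ 2 * Sx)
          = (c ^ 2 * kappa * epsQ * eps / (A - eps)) * Sx := by ring
      have h3 : c ^ 2 * kappa * epsQ * eps / (A - eps) ≤ epsP - eps := by linarith
      calc kappa * epsQ * (eps / (A - eps)) * Su1
          ≤ (c ^ 2 * kappa * epsQ * eps / (A - eps)) * Sx := by rw [← h2]; exact h1
        _ ≤ (epsP - eps) * Sx := mul_le_mul_of_nonneg_right h3 hSx0
    have hQw' : kappa * (( u1 + u2) ⬝ᵥ Q *ᵥ (u1 + u2)) ≥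
        kappa * (epsQ * ((u1 + u2) ⬝ᵥ (u1 + u2))) :=
      mul_le_mul_of_nonneg_left hQw hkappa.le
    rw [hdx, hdy]
    linarith [hPx, hQw', step1, step2, step3]
end

section
/- Let P be symmetric positive definite with p_min·I ⪯ P ⪯ p_max·I, let F be an n×(hm) matrix with ‖F‖ ≤ c_f, let Z be an (hm)×n matrix with ‖Z‖ ≤ c_z, let H be symmetric with H ⪰ λ_H·I, and let β_p > 0 satisfy 2·c_f·c_z·p_max ≤ β_p·p_min·λ_H. Then P·F·H⁻¹·Z + (P·F·H⁻¹·Z)ᵀ ⪯ β_p·P. -/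
open Matrix

private noncomputable def nrm {m : ℕ} (v : Fin m → ℝ) : ℝ := Real.sqrt (∑ i, v i ^ 2)

private lemma nrm_nonneg {m : ℕ} (v : Fin m → ℝ) : 0 ≤ nrm v := Real.sqrt_nonneg _

private lemma sq_nrm {m : ℕ} (v : Fin m → ℝ) : nrm v ^ 2 = ∑ i, v i ^ 2 :=
  Real.sq_sqrt (Finset.sum_nonneg fun _ _ => sq_nonneg _)

private lemma dot_self_eq {m : ℕ} (v : Fin m → ℝ) : v ⬝ᵥ v = nrm v ^ 2 := by
  rw [sq_nrm]; simp [dotProduct, sq]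

private lemma abs_dot_le {m : ℕ} (v w : Fin m → ℝ) : |v ⬝ᵥ w| ≤ nrm v * nrm w := by
  have h := Finset.sum_mul_sq_le_sq_mul_sq Finset.univ v w
  have h2 : |v ⬝ᵥ w| = Real.sqrt ((∑ i, v i * w i) ^ 2) := by
    rw [Real.sqrt_sq_eq_abs]; rfl
  rw [h2, nrm, nrm, ← Real.sqrt_mul (Finset.sum_nonneg fun _ _ => sq_nonneg _)]
  exact Real.sqrt_le_sqrt h

/-- the scalar condition `2 c_f c_z p_max ≤ β_p p_min λ_H` guarantees
`⟨P F H⁻¹ Z⟩ ⪯ β_p P`. -/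
theorem stmt_10 (n k : ℕ)
    (P : Matrix (Fin n) (Fin n) ℝ) (F : Matrix (Fin n) (Fin k) ℝ)
    (Z : Matrix (Fin k) (Fin n) ℝ) (H : Matrix (Fin k) (Fin k) ℝ)
    (pmin pmax cf cz lamH betap : ℝ)
    (hP : P.IsSymm) (hPpd : P.PosDef) (hH : H.IsSymm)
    (hpmin : 0 < pmin) (hlamH : 0 < lamH) (hbetap : 0 < betap)
    (hPlb : (P - pmin • (1 : Matrix (Fin n) (Fin n) ℝ)).PosSemidef)
    (hPub : (pmax • (1 : Matrix (Fin n) (Fin n) ℝ) - P).PosSemidef)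
    (hF : ∀ v : Fin k → ℝ,
      Real.sqrt (∑ i, (F.mulVec v i) ^ 2) ≤ cf * Real.sqrt (∑ j, (v j) ^ 2))
    (hZ : ∀ v : Fin n → ℝ,
      Real.sqrt (∑ i, (Z.mulVec v i) ^ 2) ≤ cz * Real.sqrt (∑ j, (v j) ^ 2))
    (hHlb : (H - lamH • (1 : Matrix (Fin k) (Fin k) ℝ)).PosSemidef)
    (hscalar : 2 * cf * cz * pmax ≤ betap * pmin * lamH) :
    (betap • P - (P * F * H⁻¹ * Z + (P * F * H⁻¹ * Z)ᵀ)).PosSemidef := by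
  set A := P * F * H⁻¹ * Z with hA
  refine PosSemidef.of_dotProduct_mulVec_nonneg ?_ ?_
  · -- Hermitian part
    ext i j
    simp only [conjTranspose_apply, Matrix.sub_apply, Matrix.smul_apply, Matrix.add_apply, transpose_apply,
      star_trivial, smul_eq_mul]
    rw [hP.apply i j]
    ring
  · intro x
    have hsx : star x = x := by simp
    rw [hsx, sub_mulVec, dotProduct_sub, add_mulVec, dotProduct_add,
      smul_mulVec, dotProduct_smul, smul_eq_mul]
    have hT : x ⬝ᵥ Aᵀ *ᵥ x = x ⬝ᵥ A *ᵥ x := by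
      rw [mulVec_transpose, dotProduct_comm, dotProduct_mulVec]
    rw [hT]
    -- reduce to key inequality
    have key : 2 * (x ⬝ᵥ A *ᵥ x) ≤ betap * (x ⬝ᵥ P *ᵥ x) := by
      have ha : x ⬝ᵥ A *ᵥ x = (P *ᵥ x) ⬝ᵥ (F *ᵥ (H⁻¹ *ᵥ (Z *ᵥ x))) := by
        rw [hA, ← mulVec_mulVec, ← mulVec_mulVec, ← mulVec_mulVec,
          dotProduct_mulVec, ← mulVec_transpose, hP]
      by_cases hx : x = 0
      · simp [hx]
      · -- norms
        have ht : 0 < nrm x := by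
          obtain ⟨i, hi⟩ := Function.ne_iff.mp hx
          exact Real.sqrt_pos.mpr (Finset.sum_pos'
            (fun j _ => sq_nonneg _)
            ⟨i, Finset.mem_univ i, lt_of_le_of_ne (sq_nonneg _) (Ne.symm (pow_ne_zero 2 hi))⟩)
        -- bounds on quadratic form of P
        have hq_lb : ∀ v : Fin n → ℝ, pmin * nrm v ^ 2 ≤ v ⬝ᵥ P *ᵥ v := by
          intro v
          have h0 := hPlb.dotProduct_mulVec_nonneg v
          simp only [star_trivial, sub_mulVec, dotProduct_sub, smul_mulVec,
            one_mulVec, dotProduct_smul, smul_eq_mul, dot_self_eq] at h0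
          linarith
        have hq_ub : ∀ v : Fin n → ℝ, v ⬝ᵥ P *ᵥ v ≤ pmax * nrm v ^ 2 := by
          intro v
          have h0 := hPub.dotProduct_mulVec_nonneg v
          simp only [star_trivial, sub_mulVec, dotProduct_sub, smul_mulVec,
            one_mulVec, dotProduct_smul, smul_eq_mul, dot_self_eq] at h0
          linarith
        have htsq : 0 < nrm x ^ 2 := by positivity
        have hpmax : 0 < pmax := by
          have h1 := hq_lb x
          have h2 := hq_ub x
          nlinarith [mul_pos hpmin htsq]
        -- ‖P v‖ ≤ pmax ‖v‖ via the psd square root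
        have hPsd := hPpd.posSemidef
        open scoped MatrixOrder in
        set s := CFC.sqrt P with hsdef
        have hsT : sᵀ = s := by
          rw [← conjTranspose_eq_transpose_of_trivial]
          open scoped MatrixOrder in
          exact (CFC.sqrt_nonneg P).posSemidef.1
        open scoped MatrixOrder in
        have hss : s * s = P := CFC.sqrt_mul_sqrt_self P hPsd.nonneg
        have hsq : ∀ v : Fin n → ℝ, nrm (s *ᵥ v) ^ 2 = v ⬝ᵥ P *ᵥ v := by
          intro v
          rw [← dot_self_eq, ← hss, ← mulVec_mulVec, dotProduct_mulVec,
            ← mulVec_transpose, hsT]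
          exact dotProduct_comm _ _
        have hsv : ∀ v : Fin n → ℝ, nrm (s *ᵥ v) ≤ Real.sqrt pmax * nrm v := by
          intro v
          have h1 : nrm (s *ᵥ v) ^ 2 ≤ pmax * nrm v ^ 2 := by
            rw [hsq]; exact hq_ub v
          have h2 := Real.sqrt_le_sqrt h1
          rwa [Real.sqrt_sq (nrm_nonneg _), Real.sqrt_mul hpmax.le,
            Real.sqrt_sq (nrm_nonneg _)] at h2
        have hu : nrm (P *ᵥ x) ≤ pmax * nrm x := by
          have h1 : P *ᵥ x = s *ᵥ (s *ᵥ x) := by rw [mulVec_mulVec, hss]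
          calc nrm (P *ᵥ x) = nrm (s *ᵥ (s *ᵥ x)) := by rw [h1]
            _ ≤ Real.sqrt pmax * nrm (s *ᵥ x) := hsv _
            _ ≤ Real.sqrt pmax * (Real.sqrt pmax * nrm x) :=
                mul_le_mul_of_nonneg_left (hsv x) (Real.sqrt_nonneg _)
            _ = pmax * nrm x := by rw [← mul_assoc, Real.mul_self_sqrt hpmax.le]
        -- H is positive definite
        have hHpd : H.PosDef := by
          refine PosDef.of_dotProduct_mulVec_pos ?_ (fun v hv => ?_)
          · show Hᴴ = H
            rw [conjTranspose_eq_transpose_of_trivial]; exact hH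
          · have h0 := hHlb.dotProduct_mulVec_nonneg v
            simp only [star_trivial, sub_mulVec, dotProduct_sub, smul_mulVec,
              one_mulVec, dotProduct_smul, smul_eq_mul, dot_self_eq] at h0 ⊢
            have hv2 : 0 < nrm v ^ 2 := by
              obtain ⟨i, hi⟩ := Function.ne_iff.mp hv
              rw [sq_nrm]
              exact Finset.sum_pos' (fun j _ => sq_nonneg _)
                ⟨i, Finset.mem_univ i, lt_of_le_of_ne (sq_nonneg _) (Ne.symm (pow_ne_zero 2 hi))⟩
            nlinarith [mul_pos hlamH hv2]
        set z := Z *ᵥ x with hzdef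
        set w := H⁻¹ *ᵥ z with hwdef
        have hHw : H *ᵥ w = z := by
          rw [hwdef, mulVec_mulVec, mul_nonsing_inv _ hHpd.det_pos.ne'.isUnit, one_mulVec]
        have hz : nrm z ≤ cz * nrm x := hZ x
        have hfw : nrm (F *ᵥ w) ≤ cf * nrm w := hF w
        have habs : |(P *ᵥ x) ⬝ᵥ (F *ᵥ w)| ≤ nrm (P *ᵥ x) * nrm (F *ᵥ w) := abs_dot_le _ _
        have hwb : lamH * nrm w ≤ nrm z := by
          have h0 := hHlb.dotProduct_mulVec_nonneg w
          simp only [star_trivial, sub_mulVec, dotProduct_sub, smul_mulVec,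
            one_mulVec, dotProduct_smul, smul_eq_mul, dot_self_eq] at h0
          have h1 : w ⬝ᵥ H *ᵥ w ≤ nrm w * nrm z := by
            rw [hHw]
            exact (le_abs_self _).trans (abs_dot_le _ _)
          rcases eq_or_lt_of_le (nrm_nonneg w) with h2 | h2
          · rw [← h2, mul_zero]; exact nrm_nonneg z
          · nlinarith
        rw [ha]
        rcases eq_or_lt_of_le (nrm_nonneg w) with hw0 | hw0
        · -- w = 0 case: F *ᵥ w has zero norm
          have hfw0 : nrm (F *ᵥ w) = 0 :=
            le_antisymm (by rw [← hw0, mul_zero] at hfw; exact hfw) (nrm_nonneg _)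
          have h1 : |(P *ᵥ x) ⬝ᵥ (F *ᵥ w)| ≤ 0 := by
            rw [hfw0, mul_zero] at habs; exact habs
          have h2 := hq_lb x
          have h4 := le_abs_self ((P *ᵥ x) ⬝ᵥ (F *ᵥ w))
          have hPx : 0 < x ⬝ᵥ P *ᵥ x := lt_of_lt_of_le (mul_pos hpmin htsq) h2
          nlinarith [mul_pos hbetap hPx]
        · have hcf : 0 ≤ cf := by
            have h5 := (nrm_nonneg (F *ᵥ w)).trans hfw
            by_contra h
            push_neg at h
            nlinarith [mul_pos (neg_pos.mpr h) hw0]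
          have hczt : 0 ≤ cz * nrm x := (nrm_nonneg z).trans hz
          -- nrm w ≤ cz * nrm x / lamH
          have hwle : nrm w ≤ cz * nrm x / lamH := by
            rw [le_div_iff₀ hlamH]
            nlinarith [hwb, hz]
          have hfw2 : nrm (F *ᵥ w) ≤ cf * (cz * nrm x / lamH) :=
            hfw.trans (mul_le_mul_of_nonneg_left hwle hcf)
          have hbound : (P *ᵥ x) ⬝ᵥ (F *ᵥ w) ≤ (pmax * nrm x) * (cf * (cz * nrm x / lamH)) := by
            calc (P *ᵥ x) ⬝ᵥ (F *ᵥ w) ≤ |(P *ᵥ x) ⬝ᵥ (F *ᵥ w)| := le_abs_self _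
              _ ≤ nrm (P *ᵥ x) * nrm (F *ᵥ w) := habs
              _ ≤ (pmax * nrm x) * (cf * (cz * nrm x / lamH)) := by
                  apply mul_le_mul hu hfw2 (nrm_nonneg _)
                  positivity
          have h2 := hq_lb x
          have hdiv : 2 * cf * cz * pmax / lamH ≤ betap * pmin := by
            rw [div_le_iff₀ hlamH]; linarith
          have hfinal : 2 * ((pmax * nrm x) * (cf * (cz * nrm x / lamH))) ≤ betap * pmin * nrm x ^ 2 := by
            have : 2 * ((pmax * nrm x) * (cf * (cz * nrm x / lamH))) =
                (2 * cf * cz * pmax / lamH) * nrm x ^ 2 := by ring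
            rw [this]
            exact mul_le_mul_of_nonneg_right hdiv htsq.le
          have hlast := mul_le_mul_of_nonneg_left h2 hbetap.le
          linarith
    linarith
end

section
/- Let J : ℝ → ℝ^{(hm)×(n+hm)}, Q : ℝ → Sym(hm), A : ℝ → ℝ^{(n+hm)×(n+hm)}, and B : ℝ → ℝ^{(hm)×(hm)} be differentiable, and suppose J'(t) = B(t)·J(t) − J(t)·A(t) + R(t) for some R(t). Define M(t) := J(t)ᵀ·Q(t)·J(t). Then M'(t) + M(t)·A(t) + A(t)ᵀ·M(t) + γ·M(t) = J(t)ᵀ·(Q'(t) + Q(t)·B(t) + B(t)ᵀ·Q(t) + γ·Q(t))·J(t) + J(t)ᵀ Q(t) R(t) + R(t)ᵀ Q(t) J(t) when R(t) is as above; in particular, if J'(t) = B(t)·J(t) − J(t)·A(t) (i.e., R = 0), then the pulled-back contraction expression for M equals Jᵀ·(Q' + ⟨Q B⟩ + γ Q)·J. -/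
open Matrix

lemma stmt14_alg {k N : ℕ} (gamma : ℝ)
    (J R : Matrix (Fin k) (Fin N) ℝ) (Q Q' B : Matrix (Fin k) (Fin k) ℝ)
    (A : Matrix (Fin N) (Fin N) ℝ) (hQ : Qᵀ = Q) :
    (B * J - J * A + R)ᵀ * Q * J + Jᵀ * Q' * J + Jᵀ * Q * (B * J - J * A + R)
    = Jᵀ * (Q' + Q * B + Bᵀ * Q + gamma • Q) * J + Jᵀ * Q * R + Rᵀ * Q * J
        - ((Jᵀ * Q * J) * A + Aᵀ * (Jᵀ * Q * J) + gamma • (Jᵀ * Q * J)) := by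
  have : Jᵀ * (gamma • Q) * J = gamma • (Jᵀ * Q * J) := by
    simp [Matrix.mul_smul, Matrix.smul_mul]
  simp only [transpose_add, transpose_sub, transpose_mul, transpose_transpose, hQ,
    Matrix.mul_add, Matrix.add_mul, Matrix.mul_sub, Matrix.sub_mul, this, Matrix.mul_assoc]
  abel

/-- pull-back of the contraction operator through an intertwining
Jacobian: if `J' = B J − J A + R` and `M = Jᵀ Q J`, then
`M' + M A + Aᵀ M + γ M = Jᵀ (Q' + Q B + Bᵀ Q + γ Q) J + Jᵀ Q R + Rᵀ Q J`. -/
theorem stmt_14 (k N : ℕ) (gamma : ℝ)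
    (J : ℝ → Matrix (Fin k) (Fin N) ℝ)
    (Q Q' : ℝ → Matrix (Fin k) (Fin k) ℝ)
    (A : ℝ → Matrix (Fin N) (Fin N) ℝ)
    (B : ℝ → Matrix (Fin k) (Fin k) ℝ)
    (R : ℝ → Matrix (Fin k) (Fin N) ℝ)
    (hQsymm : ∀ t, (Q t).IsSymm)
    (hJ : ∀ t i j, HasDerivAt (fun τ => J τ i j) ((B t * J t - J t * A t + R t) i j) t)
    (hQ : ∀ t i j, HasDerivAt (fun τ => Q τ i j) (Q' t i j) t)
    (M : ℝ → Matrix (Fin N) (Fin N) ℝ)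
    (hM : M = fun t => (J t)ᵀ * Q t * J t) :
    ∀ t i j,
      HasDerivAt (fun τ => M τ i j)
        (((J t)ᵀ * (Q' t + Q t * B t + (B t)ᵀ * Q t + gamma • Q t) * J t
            + (J t)ᵀ * Q t * R t + (R t)ᵀ * Q t * J t
            - (M t * A t + (A t)ᵀ * M t + gamma • M t)) i j) t := by
  intro t i j
  subst hM
  set D := B t * J t - J t * A t + R t with hD
  have key := stmt14_alg gamma (J t) (R t) (Q t) (Q' t) (B t) (A t) (hQsymm t)
  rw [← hD] at key
  rw [← key]
  have : ∀ τ, ((J τ)ᵀ * Q τ * J τ) i j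
      = ∑ b, (∑ a, J τ a i * Q τ a b) * J τ b j := by
    intro τ; simp [Matrix.mul_apply, Matrix.transpose_apply]
  simp only [this]
  have goal_eq : (Dᵀ * Q t * J t + (J t)ᵀ * Q' t * J t + (J t)ᵀ * Q t * D) i j
      = ∑ b, ((∑ a, (D a i * Q t a b + J t a i * Q' t a b)) * J t b j
          + (∑ a, J t a i * Q t a b) * D b j) := by
    simp [Matrix.mul_apply, Matrix.transpose_apply, Finset.sum_mul, Finset.sum_add_distrib,
      add_mul]
  rw [goal_eq]
  apply HasDerivAt.fun_sum
  intro b _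
  exact ((HasDerivAt.fun_sum (fun a _ => (hJ t a i).fun_mul (hQ t a b))).mul (hJ t b j)).congr_deriv
    (by rw [← hD])
end
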